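/- arXiv:2002.04069 — 2 statements merged into one kernel-verified Lean document; each statement's English description precedes it below -/
import Mathlib

section
/- For any constant M > 0, the function g(x) = 1 / log(1 + M/x) is concave on (0, ∞). -/
open Set Real

/-- log(1+u) ≥ u/(1+u) for u ≥ 0. -/
lemma log_ge_div (u : ℝ) (hu : 0 ≤ u) : u / (1 + u) ≤ Real.log (1 + u) := by
  have h1u : (0:ℝ) < 1 + u := by linarith
  have h := Real.log_le_sub_one_of_pos (x := (1 + u)⁻¹) (by positivity)
  rw [Real.log_inv] at h
  have he : (1 + u)⁻¹ - 1 = -(u / (1 + u)) := by field_simp; ring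
  rw [he] at h
  linarith

/-- Key inequality: (2+u) log(1+u) ≥ 2u for u ≥ 0. -/
lemma key_ineq (u : ℝ) (hu : 0 ≤ u) : 2 * u ≤ (2 + u) * Real.log (1 + u) := by
  set φ : ℝ → ℝ := fun u => (2 + u) * Real.log (1 + u) - 2 * u with hφ
  have hmono : MonotoneOn φ (Ici 0) := by
    apply monotoneOn_of_hasDerivWithinAt_nonneg (convex_Ici 0)
      (f' := fun x => Real.log (1 + x) + (2 + x) / (1 + x) - 2)
    · intro x hx
      have h1x : (0:ℝ) < 1 + x := by
        have : (0:ℝ) ≤ x := hx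
        linarith
      refine ContinuousAt.continuousWithinAt ?_
      exact ((continuousAt_const.add continuousAt_id).mul
        ((continuousAt_const.add continuousAt_id).log h1x.ne')).sub
        (continuousAt_const.mul continuousAt_id)
    · intro x hx
      rw [interior_Ici] at hx
      have hx0 : (0:ℝ) < x := hx
      have h1x : (0:ℝ) < 1 + x := by linarith
      have h1 : HasDerivAt (fun x : ℝ => 1 + x) 1 x := by
        simpa using (hasDerivAt_id x).const_add 1
      have h2 : HasDerivAt (fun x : ℝ => Real.log (1 + x)) (1 / (1 + x)) x := by
        simpa using h1.log h1x.ne'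
      have h3 : HasDerivAt (fun x : ℝ => 2 + x) 1 x := by
        simpa using (hasDerivAt_id x).const_add 2
      have h5 : HasDerivAt (fun x : ℝ => 2 * x) 2 x := by
        simpa using (hasDerivAt_id x).const_mul 2
      have h6 := (h3.mul h2).sub h5
      have h7 : 1 * Real.log (1 + x) + (2 + x) * (1 / (1 + x)) - 2
          = Real.log (1 + x) + (2 + x) / (1 + x) - 2 := by ring
      rw [h7] at h6
      exact h6.hasDerivWithinAt
    · intro x hx
      rw [interior_Ici] at hx
      have hx0 : (0:ℝ) < x := hx
      have h1x : (0:ℝ) < 1 + x := by linarith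
      have hl := log_ge_div x hx0.le
      have : (2 + x) / (1 + x) - 2 = -(x / (1 + x)) := by field_simp; ring
      linarith
  have h0 : φ 0 = 0 := by simp [hφ]
  have := hmono (self_mem_Ici) hu hu
  rw [h0] at this
  simp only [hφ] at this
  linarith


lemma hasDerivAt_L {M x : ℝ} (hM : 0 < M) (hx : 0 < x) :
    HasDerivAt (fun x => Real.log (1 + M / x)) (-M / (x * (x + M))) x := by
  have hxM : 0 < x + M := by linarith
  have h1 : HasDerivAt (fun x : ℝ => 1 + M / x) (M * -(x ^ 2)⁻¹) x := by
    simpa [div_eq_mul_inv] using ((hasDerivAt_inv hx.ne').const_mul M).const_add 1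
  have hpos : (0:ℝ) < 1 + M / x := by positivity
  have h2 := h1.log hpos.ne'
  convert h2 using 1
  field_simp

lemma logpos {M x : ℝ} (hM : 0 < M) (hx : 0 < x) : 0 < Real.log (1 + M / x) :=
  Real.log_pos (by nlinarith [div_pos hM hx])

lemma hasDerivAt_f {M x : ℝ} (hM : 0 < M) (hx : 0 < x) :
    HasDerivAt (fun x => 1 / Real.log (1 + M / x))
      (-(-M / (x * (x + M))) / Real.log (1 + M / x) ^ 2) x := by
  simpa [one_div, Pi.inv_def] using (hasDerivAt_L hM hx).inv (logpos hM hx).ne'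

lemma hasDerivAt_u {M x : ℝ} (hM : 0 < M) (hx : 0 < x) :
    HasDerivAt (fun x => x * (x + M) * Real.log (1 + M / x) ^ 2)
      ((2 * x + M) * Real.log (1 + M / x) ^ 2 - 2 * M * Real.log (1 + M / x)) x := by
  have hxM : 0 < x + M := by linarith
  have hp : HasDerivAt (fun x : ℝ => x * (x + M)) (1 * (x + M) + x * 1) x :=
    (hasDerivAt_id x).mul ((hasDerivAt_id x).add_const M)
  have hq : HasDerivAt (fun x => Real.log (1 + M / x) ^ 2) _ x := (hasDerivAt_L hM hx).pow 2
  have h : HasDerivAt (fun x => x * (x + M) * Real.log (1 + M / x) ^ 2) _ x := hp.mul hq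
  convert h using 1
  field_simp
  ring

theorem g_concave (M : ℝ) (hM : 0 < M) :
    ConcaveOn ℝ (Set.Ioi (0 : ℝ)) (fun x => 1 / Real.log (1 + M / x)) := by
  apply AntitoneOn.concaveOn_of_deriv (convex_Ioi 0)
  · intro x hx
    exact (hasDerivAt_f hM hx).continuousAt.continuousWithinAt
  · rw [interior_Ioi]
    intro x hx
    exact (hasDerivAt_f hM hx).differentiableAt.differentiableWithinAt
  · rw [interior_Ioi]
    have hderiv : ∀ x ∈ Ioi (0:ℝ), deriv (fun x => 1 / Real.log (1 + M / x)) x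
        = M / (x * (x + M) * Real.log (1 + M / x) ^ 2) := by
      intro x hx
      rw [(hasDerivAt_f hM hx).deriv]
      have hxM : (0:ℝ) < x + M := by have : (0:ℝ) < x := hx; linarith
      have hx0 : (0:ℝ) < x := hx
      field_simp
    have humono : MonotoneOn (fun x => x * (x + M) * Real.log (1 + M / x) ^ 2) (Ioi 0) := by
      apply monotoneOn_of_hasDerivWithinAt_nonneg (convex_Ioi 0)
        (f' := fun x => (2 * x + M) * Real.log (1 + M / x) ^ 2 - 2 * M * Real.log (1 + M / x))
      · intro x hx
        exact (hasDerivAt_u hM hx).continuousAt.continuousWithinAt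
      · rw [interior_Ioi]
        intro x hx
        exact (hasDerivAt_u hM hx).hasDerivWithinAt
      · rw [interior_Ioi]
        intro x hx
        have hx0 : (0:ℝ) < x := hx
        have hL := logpos hM hx0
        have hk := key_ineq (M / x) (by positivity)
        have h2 := mul_le_mul_of_nonneg_left hk hx0.le
        have e1 : x * (2 * (M / x)) = 2 * M := by field_simp
        have e2 : x * ((2 + M / x) * Real.log (1 + M / x))
            = (2 * x + M) * Real.log (1 + M / x) := by field_simp
        rw [e1, e2] at h2
        nlinarith [mul_le_mul_of_nonneg_right h2 hL.le]
    intro x hx y hy hxy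
    rw [hderiv x hx, hderiv y hy]
    have hx0 : (0:ℝ) < x := hx
    have hux : 0 < x * (x + M) * Real.log (1 + M / x) ^ 2 :=
      mul_pos (mul_pos hx0 (by linarith)) (pow_pos (logpos hM hx0) 2)
    exact div_le_div_of_nonneg_left hM.le hux (humono hx hy hxy)
end

section
/- Suppose K links each achieve rate at least log2(1 + A/|S_k|) where A > 0 and |S_k| > 0 for k = 1,…,K, and the total latency is δ = ∑_{k=1}^K 1/R_k with R_k = log2(1 + A/|S_k|). Then δ ≤ K / log2(1 + A·K/∑_{k=1}^K |S_k|). -/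
open Set

/-- Padé-type lower bound for the logarithm: `log (1+t) ≥ 2t/(2+t)` for `t > 0`. -/
lemma pade_log (t : ℝ) (ht : 0 < t) : 2 * t / (2 + t) ≤ Real.log (1 + t) := by
  set φ : ℝ → ℝ := fun x => Real.log (1 + x) - 2 * x / (2 + x) with hφ
  have hd : ∀ x : ℝ, -1 < x → HasDerivAt φ (1 / (1 + x) - 4 / (2 + x) ^ 2) x := by
    intro x hx
    have hx1 : (1 : ℝ) + x ≠ 0 := by linarith
    have hx2 : (2 : ℝ) + x ≠ 0 := by linarith
    have h1 : HasDerivAt (fun y : ℝ => Real.log (1 + y)) (1 / (1 + x)) x := by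
      have := ((hasDerivAt_const x (1:ℝ)).add (hasDerivAt_id x)).log hx1
      simpa using this
    have h2 : HasDerivAt (fun y : ℝ => 2 * y / (2 + y))
        (4 / (2 + x) ^ 2) x := by
      have := ((hasDerivAt_id x).const_mul 2).div
        ((hasDerivAt_const x (2:ℝ)).add (hasDerivAt_id x)) hx2
      have h4 : (2 * 1 * (2 + id x) - 2 * id x * (0 + 1)) / (2 + id x) ^ 2
          = 4 / (2 + x) ^ 2 := by simp [id]; ring_nf
      exact this.congr_deriv h4
    exact h1.sub h2
  have hmono : MonotoneOn φ (Ici (0:ℝ)) := by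
    apply monotoneOn_of_deriv_nonneg (convex_Ici 0)
    · intro x hx
      exact ((hd x (by simp at hx; linarith)).differentiableAt.continuousAt).continuousWithinAt
    · rw [interior_Ici]
      intro x hx
      exact ((hd x (by simp at hx; linarith)).differentiableAt).differentiableWithinAt
    · rw [interior_Ici]
      intro x hx
      simp only [mem_Ioi] at hx
      rw [(hd x (by linarith)).deriv]
      have hx1 : (0:ℝ) < 1 + x := by linarith
      have hx2 : (0:ℝ) < 2 + x := by linarith
      have heq : 1 / (1 + x) - 4 / (2 + x) ^ 2 = x ^ 2 / ((1 + x) * (2 + x) ^ 2) := by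
        field_simp
        ring
      rw [heq]
      positivity
  have h0 : φ 0 = 0 := by simp [hφ]
  have := hmono (self_mem_Ici) (mem_Ici.mpr ht.le) ht.le
  rw [h0] at this
  have : 0 ≤ Real.log (1 + t) - 2 * t / (2 + t) := this
  linarith

/-- Concavity of `x ↦ log 2 / log (1 + A/x)` on `(0, ∞)`. -/
lemma concave_latency (A : ℝ) (hA : 0 < A) :
    ConcaveOn ℝ (Ioi (0:ℝ)) (fun x => Real.log 2 / Real.log (1 + A / x)) := by
  have c2 : (0:ℝ) < Real.log 2 := Real.log_pos (by norm_num)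
  set L : ℝ → ℝ := fun x => Real.log (1 + A / x) with hLdef
  have hupos : ∀ x : ℝ, 0 < x → 0 < 1 + A / x := by
    intro x hx; have := div_pos hA hx; linarith
  have hLpos : ∀ x : ℝ, 0 < x → 0 < L x := by
    intro x hx
    exact Real.log_pos (by have := div_pos hA hx; linarith)
  have hLd : ∀ x : ℝ, 0 < x → HasDerivAt L (-(A / (x * (x + A)))) x := by
    intro x hx
    have hx0 : x ≠ 0 := ne_of_gt hx
    have hxA : x + A ≠ 0 := by positivity
    have hu0 : (1 : ℝ) + A / x ≠ 0 := ne_of_gt (hupos x hx)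
    have hu : HasDerivAt (fun y : ℝ => 1 + A / y) (-(A / x ^ 2)) x := by
      have h2 := (hasDerivAt_const x (1:ℝ)).add ((hasDerivAt_inv hx0).const_mul A)
      simp only [div_eq_mul_inv]
      refine h2.congr_deriv ?_
      ring
    have := hu.log hu0
    convert this using 1
    field_simp
  have hFd : ∀ x : ℝ, 0 < x →
      HasDerivAt (fun y => Real.log 2 / Real.log (1 + A / y))
        (Real.log 2 * A / (x * (x + A) * L x ^ 2)) x := by
    intro x hx
    have hx0 : x ≠ 0 := ne_of_gt hx
    have hxA : x + A ≠ 0 := by positivity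
    have hLne : L x ≠ 0 := ne_of_gt (hLpos x hx)
    have := ((hLd x hx).inv hLne).const_mul (Real.log 2)
    simp only [div_eq_mul_inv]
    refine this.congr_deriv ?_
    field_simp
  have hhd : ∀ x : ℝ, 0 < x →
      HasDerivAt (fun y => y * (y + A) * L y ^ 2)
        ((2 * x + A) * L x ^ 2 - 2 * A * L x) x := by
    intro x hx
    have hx0 : x ≠ 0 := ne_of_gt hx
    have hxA : x + A ≠ 0 := by positivity
    have h1 : HasDerivAt (fun y : ℝ => y * (y + A)) (1 * (x + A) + x * 1) x :=
      (hasDerivAt_id x).mul ((hasDerivAt_id x).add_const A)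
    have h2 : HasDerivAt (fun y => L y ^ 2) (2 * L x ^ 1 * -(A / (x * (x + A)))) x :=
      (hLd x hx).pow 2
    have := h1.mul h2
    refine this.congr_deriv ?_
    field_simp
    ring
  have hF'd : ∀ x : ℝ, 0 < x →
      HasDerivAt (fun y => Real.log 2 * A / (y * (y + A) * L y ^ 2))
        (Real.log 2 * A *
          (-((2 * x + A) * L x ^ 2 - 2 * A * L x) / (x * (x + A) * L x ^ 2) ^ 2)) x := by
    intro x hx
    have hne : x * (x + A) * L x ^ 2 ≠ 0 := by
      have := hLpos x hx; positivity
    have := ((hhd x hx).inv hne).const_mul (Real.log 2 * A)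
    simp only [div_eq_mul_inv]
    refine this.congr_deriv ?_
    ring
  apply concaveOn_of_hasDerivWithinAt2_nonpos (convex_Ioi 0)
    (f' := fun x => Real.log 2 * A / (x * (x + A) * L x ^ 2))
    (f'' := fun x => Real.log 2 * A *
      (-((2 * x + A) * L x ^ 2 - 2 * A * L x) / (x * (x + A) * L x ^ 2) ^ 2))
  · intro x hx
    exact (hFd x hx).continuousAt.continuousWithinAt
  · rw [interior_Ioi]
    intro x hx
    exact (hFd x hx).hasDerivWithinAt
  · rw [interior_Ioi]
    intro x hx
    exact (hF'd x hx).hasDerivWithinAt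
  · rw [interior_Ioi]
    intro x hx
    simp only [mem_Ioi] at hx
    have hL := hLpos x hx
    have hkey : 2 * A / (2 * x + A) ≤ L x := by
      have := pade_log (A / x) (div_pos hA hx)
      have heq : 2 * (A / x) / (2 + A / x) = 2 * A / (2 * x + A) := by
        rw [div_eq_div_iff (by positivity) (by positivity)]
        field_simp
      rwa [heq] at this
    have hnum : 0 ≤ (2 * x + A) * L x ^ 2 - 2 * A * L x := by
      have h1 : 2 * A ≤ (2 * x + A) * L x := by
        rw [div_le_iff₀ (by positivity)] at hkey
        linarith
      nlinarith
    have hden : (0:ℝ) ≤ (x * (x + A) * L x ^ 2) ^ 2 := sq_nonneg _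
    have : -((2 * x + A) * L x ^ 2 - 2 * A * L x) / (x * (x + A) * L x ^ 2) ^ 2 ≤ 0 := by
      apply div_nonpos_of_nonpos_of_nonneg (by linarith) hden
    exact mul_nonpos_of_nonneg_of_nonpos (by positivity) this

theorem latency_jensen (A : ℝ) (hA : 0 < A) (K : ℕ) (hK : 0 < K)
    (S : Fin K → ℝ) (hS : ∀ k, 0 < S k) :
    ∑ k, 1 / Real.logb 2 (1 + A / S k) ≤
      (K : ℝ) / Real.logb 2 (1 + A * K / ∑ k, S k) := by
  have hKpos : (0:ℝ) < K := Nat.cast_pos.mpr hK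
  have hK0 : (K:ℝ) ≠ 0 := ne_of_gt hKpos
  have : Nonempty (Fin K) := Fin.pos_iff_nonempty.mp hK
  have hsum : 0 < ∑ k, S k := Finset.sum_pos (fun k _ => hS k) Finset.univ_nonempty
  have hsum0 : (∑ k, S k) ≠ 0 := ne_of_gt hsum
  have hconc := concave_latency A hA
  have hj := hconc.le_map_sum (t := Finset.univ) (w := fun _ => (K:ℝ)⁻¹) (p := S)
    (fun i _ => by positivity)
    (by simp [Finset.sum_const, Finset.card_univ, mul_inv_cancel₀ hK0])
    (fun i _ => hS i)
  simp only [smul_eq_mul, ← Finset.mul_sum] at hj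
  -- rewrite the argument of the RHS
  have hm : (1 : ℝ) + A / ((K:ℝ)⁻¹ * ∑ k, S k) = 1 + A * K / ∑ k, S k := by
    congr 1
    field_simp
  rw [hm] at hj
  -- rewrite logb in terms of log
  have hz : (0:ℝ) < Real.log (1 + A * K / ∑ k, S k) := by
    apply Real.log_pos
    have : 0 < A * K / ∑ k, S k := by positivity
    linarith
  have hgoalL : ∀ k, 1 / Real.logb 2 (1 + A / S k)
      = Real.log 2 / Real.log (1 + A / S k) := by
    intro k
    rw [Real.logb, one_div_div]
  have hgoalR : (K : ℝ) / Real.logb 2 (1 + A * K / ∑ k, S k)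
      = (K : ℝ) * (Real.log 2 / Real.log (1 + A * K / ∑ k, S k)) := by
    rw [Real.logb, div_div_eq_mul_div, mul_div_assoc]
  simp only [hgoalL, hgoalR]
  calc ∑ k, Real.log 2 / Real.log (1 + A / S k)
      = (K : ℝ) * ((K:ℝ)⁻¹ * ∑ k, Real.log 2 / Real.log (1 + A / S k)) := by
        field_simp
    _ ≤ (K : ℝ) * (Real.log 2 / Real.log (1 + A * K / ∑ k, S k)) := by
        apply mul_le_mul_of_nonneg_left _ hKpos.le
        exact hj
end
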